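/- Let ℋ=(H,ℰ) be a Canonical Network with Embedded Trees (CNET) for a set 𝒯 of rooted binary phylogenetic X-trees, with hybridization number k≥1 and deletion AAF F. For each T∈𝒯, let I(T) be the set of nodes of T that belong to no path of T between two leaves lying in the same component of F (the root being counted as a leaf). Then |I(T)| ≤ k−1 for every T∈𝒯; consequently, if |𝒯|=3 then |⋃_{T∈𝒯} I(T)| ≤ 3(k−1). -/

import Mathlib

open scoped Classical

/-! ## Finite directed graphs on `ℕ` -/

/-- A finite directed graph with vertices drawn from `ℕ`. -/
structure FinDigraph where
  verts : Finset ℕ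
  edges : Finset (ℕ × ℕ)
deriving DecidableEq

namespace FinDigraph

def Adj (G : FinDigraph) (u v : ℕ) : Prop := (u, v) ∈ G.edges

def indeg (G : FinDigraph) (v : ℕ) : ℕ := (G.edges.filter fun e => e.2 = v).card

def outdeg (G : FinDigraph) (v : ℕ) : ℕ := (G.edges.filter fun e => e.1 = v).card

def Reaches (G : FinDigraph) : ℕ → ℕ → Prop := Relation.ReflTransGen G.Adj

def Acyclic (G : FinDigraph) : Prop := ∀ u v, G.Adj u v → ¬ G.Reaches v u

/-- All edge endpoints are vertices. -/
def WF (G : FinDigraph) : Prop := ∀ e ∈ G.edges, e.1 ∈ G.verts ∧ e.2 ∈ G.verts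

def IsSource (G : FinDigraph) (v : ℕ) : Prop := v ∈ G.verts ∧ G.indeg v = 0

def IsLeaf (G : FinDigraph) (v : ℕ) : Prop := v ∈ G.verts ∧ G.outdeg v = 0

def leaves (G : FinDigraph) : Finset ℕ := G.verts.filter fun v => G.outdeg v = 0

/-- A reticulation: a node of indegree at least 2. -/
def IsRetic (G : FinDigraph) (v : ℕ) : Prop := v ∈ G.verts ∧ 2 ≤ G.indeg v

/-- The hybridization number `∑ (d⁻(v) − 1)` over all nodes `v` with indegree at least 2. -/
def hybNum (G : FinDigraph) : ℕ :=
  ∑ v ∈ G.verts.filter (fun v => 2 ≤ G.indeg v), (G.indeg v - 1)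

end FinDigraph

/-! ## Phylogenetic trees and binary networks (taxa are identified with leaf names) -/

/-- A rooted binary phylogenetic tree: a root of indegree 0 and outdegree 1 from which
everything is reachable; every other node has indegree 1 and outdegree 0 (a leaf) or 2. -/
def IsPhyloTree (T : FinDigraph) : Prop :=
  T.WF ∧ T.Acyclic ∧
  (∃ r, T.IsSource r ∧ T.outdeg r = 1 ∧ ∀ v ∈ T.verts, T.Reaches r v) ∧
  (∀ v ∈ T.verts, T.indeg v = 0 ∨ (T.indeg v = 1 ∧ (T.outdeg v = 0 ∨ T.outdeg v = 2)))

/-- A rooted binary phylogenetic tree whose set of taxa (= leaves) is `X`. -/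
def IsTreeOn (T : FinDigraph) (X : Finset ℕ) : Prop := IsPhyloTree T ∧ T.leaves = X

/-- A binary rooted phylogenetic network: a DAG with a single root of indegree 0 and
outdegree 1 from which everything is reachable; every other node is a leaf
(indegree 1, outdegree 0) or has total degree 3. -/
def IsBinNetwork (N : FinDigraph) : Prop :=
  N.WF ∧ N.Acyclic ∧
  (∃ r, N.IsSource r ∧ N.outdeg r = 1 ∧ ∀ v ∈ N.verts, N.Reaches r v) ∧
  (∀ v ∈ N.verts,
    N.indeg v = 0 ∨ (N.indeg v = 1 ∧ N.outdeg v = 0) ∨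
    (N.indeg v + N.outdeg v = 3 ∧ N.outdeg v ≠ 0))

/-! ## Displaying trees: subdivision embeddings -/

/-- The list of consecutive pairs of a list (the edges of a path). -/
def pathEdges : List ℕ → List (ℕ × ℕ)
  | a :: b :: l => (a, b) :: pathEdges (b :: l)
  | _ => []

/-- Internal vertices of a path. -/
def internals (l : List ℕ) : List ℕ := l.tail.dropLast

/-- The edge set `E` forms a subdivision of the tree `T`, witnessed by the vertex map `φ`
and, for each tree edge, a directed path `P`: suppressing all degree-2 nodes of the graph
formed by `E` yields `T`. -/
def IsSubdivisionVia (T : FinDigraph) (E : Finset (ℕ × ℕ))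
    (φ : ℕ → ℕ) (P : ℕ → ℕ → List ℕ) : Prop :=
  Set.InjOn φ ↑T.verts ∧
  (∀ v, T.IsLeaf v → φ v = v) ∧
  (∀ e ∈ T.edges,
    (P e.1 e.2).head? = some (φ e.1) ∧ (P e.1 e.2).getLast? = some (φ e.2) ∧
    2 ≤ (P e.1 e.2).length ∧ (P e.1 e.2).Nodup ∧
    ∀ d ∈ pathEdges (P e.1 e.2), d ∈ E) ∧
  (∀ d ∈ E, ∃ e ∈ T.edges, d ∈ pathEdges (P e.1 e.2)) ∧
  (∀ e ∈ T.edges, ∀ e' ∈ T.edges, e ≠ e' →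
    ∀ x ∈ internals (P e.1 e.2), x ∉ P e'.1 e'.2) ∧
  (∀ e ∈ T.edges, ∀ x ∈ internals (P e.1 e.2), ∀ w ∈ T.verts, φ w ≠ x)

/-- `N` displays `T`: `T` can be obtained from a subgraph of `N` by contracting edges;
equivalently, some subgraph of `N` is a subdivision of `T` (leaves are kept pointwise). -/
def Displays (N T : FinDigraph) : Prop :=
  ∃ E : Finset (ℕ × ℕ), E ⊆ N.edges ∧
    ∃ (φ : ℕ → ℕ) (P : ℕ → ℕ → List ℕ), IsSubdivisionVia T E φ P

/-- `N` is a hybridization network for the trees `𝒯` on taxa `X`. -/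
def IsHybNetworkFor {ι : Type} (N : FinDigraph) (𝒯 : ι → FinDigraph) (X : Finset ℕ) : Prop :=
  IsBinNetwork N ∧ N.leaves = X ∧ ∀ i, Displays N (𝒯 i)

/-! ## The deletion forest of a network -/

/-- Adjacency after deleting all reticulation edges (edges entering a node of
indegree at least 2), made symmetric. -/
def delAdj (N : FinDigraph) (u v : ℕ) : Prop :=
  ((u, v) ∈ N.edges ∧ N.indeg v ≤ 1) ∨ ((v, u) ∈ N.edges ∧ N.indeg u ≤ 1)

/-- Connectivity after deleting all reticulation edges. -/
def DelReach (N : FinDigraph) : ℕ → ℕ → Prop := Relation.ReflTransGen (delAdj N)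

/-- The deletion forest of a network: delete all reticulation edges, discard components
without taxa, and take the induced partition of the taxa. -/
noncomputable def deletionForest (N : FinDigraph) : Finset (Finset ℕ) :=
  N.leaves.image fun x => N.leaves.filter fun y => DelReach N x y

/-! ## Paths, spans, triples, agreement forests -/

/-- `v` lies on the (undirected) path between the leaves `a` and `b` in the tree `T`. -/
def OnTreePath (T : FinDigraph) (a b v : ℕ) : Prop :=
  (T.Reaches v a ∧ ¬ T.Reaches v b) ∨ (T.Reaches v b ∧ ¬ T.Reaches v a) ∨
  (T.Reaches v a ∧ T.Reaches v b ∧ ∀ w, T.Reaches w a → T.Reaches w b → T.Reaches w v)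

/-- `v` is the lowest common ancestor of `a` and `b` in `T`. -/
def IsLCA (T : FinDigraph) (a b v : ℕ) : Prop :=
  T.Reaches v a ∧ T.Reaches v b ∧ ∀ w, T.Reaches w a → T.Reaches w b → T.Reaches w v

/-- The rooted triple `ab|c` holds in `T`. -/
def Triple (T : FinDigraph) (a b c : ℕ) : Prop :=
  ∃ u v, IsLCA T a b u ∧ IsLCA T a c v ∧ u ≠ v ∧ T.Reaches v u

/-- The restrictions of `T` and `T'` to the taxa in `B` are isomorphic
(same rooted triples). -/
def SameTriples (T T' : FinDigraph) (B : Finset ℕ) : Prop :=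
  ∀ a ∈ B, ∀ b ∈ B, ∀ c ∈ B, (Triple T a b c ↔ Triple T' a b c)

/-- `v` belongs to the minimal subtree `T(B)` of `T` spanning the taxa in `B`. -/
def InSpan (T : FinDigraph) (B : Finset ℕ) (v : ℕ) : Prop :=
  ∃ a ∈ B, ∃ b ∈ B, OnTreePath T a b v

/-- A partition `P` of the taxa is a forest for the tree `T`: its blocks consist of
taxa, cover all taxa, and span node-disjoint subtrees of `T`. -/
def IsForestFor (T : FinDigraph) (P : Finset (Finset ℕ)) : Prop :=
  (∀ B ∈ P, B.Nonempty) ∧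
  (∀ B ∈ P, ∀ x ∈ B, T.IsLeaf x) ∧
  (∀ x, T.IsLeaf x → ∃ B ∈ P, x ∈ B) ∧
  (∀ B ∈ P, ∀ B' ∈ P, B ≠ B' → ∀ v, InSpan T B v → ¬ InSpan T B' v)

/-- `r` is the root of the subtree `T(B)`. -/
def SpanRoot (T : FinDigraph) (B : Finset ℕ) (r : ℕ) : Prop :=
  InSpan T B r ∧ ∀ v, InSpan T B v → T.Reaches r v

/-- Edge of the inheritance graph `IG(𝒯, P)`. -/
def IGAdj {ι : Type} (𝒯 : ι → FinDigraph) (P : Finset (Finset ℕ))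
    (B B' : Finset ℕ) : Prop :=
  B ∈ P ∧ B' ∈ P ∧ B ≠ B' ∧
  ∃ i, ∃ r r', SpanRoot (𝒯 i) B r ∧ SpanRoot (𝒯 i) B' r' ∧ (𝒯 i).Reaches r r'

/-- The inheritance graph contains no directed cycle. -/
def IGAcyclic {ι : Type} (𝒯 : ι → FinDigraph) (P : Finset (Finset ℕ)) : Prop :=
  ∀ B B', IGAdj 𝒯 P B B' → ¬ Relation.ReflTransGen (IGAdj 𝒯 P) B' B

/-- `P` is an agreement forest of the trees `𝒯`. -/
def IsAgreementForest {ι : Type} (𝒯 : ι → FinDigraph) (P : Finset (Finset ℕ)) : Prop :=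
  (∀ i, IsForestFor (𝒯 i) P) ∧ ∀ i j, ∀ B ∈ P, SameTriples (𝒯 i) (𝒯 j) B

/-- `P` is an acyclic agreement forest (AAF) of the trees `𝒯`. -/
def IsAAF {ι : Type} (𝒯 : ι → FinDigraph) (P : Finset (Finset ℕ)) : Prop :=
  IsAgreementForest 𝒯 P ∧ IGAcyclic 𝒯 P

/-! ## Pendant subtrees and chains -/

/-- `Y` is the taxon set of a pendant subtree of `T`. -/
def PendantIn (T : FinDigraph) (Y : Finset ℕ) : Prop :=
  ∃ v ∈ T.verts, ¬ T.IsSource v ∧ Y = T.leaves.filter fun x => T.Reaches v x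

/-- The trees `𝒯` have no nontrivial common pendant subtree. -/
def NoNontrivialCPS {ι : Type} (𝒯 : ι → FinDigraph) : Prop :=
  ¬ ∃ Y : Finset ℕ, 2 ≤ Y.card ∧ (∀ i, PendantIn (𝒯 i) Y) ∧
      ∀ i j, SameTriples (𝒯 i) (𝒯 j) Y

/-- The tuple `xs = (x_1, …, x_q)` is a chain of the tree `T`: with `p_i` the parent
of `x_i`, either `(p_q, …, p_1)` is a directed path of `T`, or `(p_q, …, p_2)` is a
directed path of `T` and `p_1 = p_2`. -/
def ChainIn (T : FinDigraph) (xs : List ℕ) : Prop :=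
  xs ≠ [] ∧ (∀ x ∈ xs, T.IsLeaf x) ∧
  ∃ ps : List ℕ, ps.length = xs.length ∧
    (∀ n (h : n < xs.length) (h' : n < ps.length),
      (ps.get ⟨n, h'⟩, xs.get ⟨n, h⟩) ∈ T.edges) ∧
    (ps.reverse.Chain' (fun a b => (a, b) ∈ T.edges) ∨
      ∃ p q rest, ps = p :: q :: rest ∧ p = q ∧
        (q :: rest).reverse.Chain' (fun a b => (a, b) ∈ T.edges))

/-- A common chain of the trees `𝒯`: a maximal tuple that is a chain of every tree. -/
def CommonChain {ι : Type} (𝒯 : ι → FinDigraph) (xs : List ℕ) : Prop :=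
  (∀ i, ChainIn (𝒯 i) xs) ∧ ∀ ys, (∀ i, ChainIn (𝒯 i) ys) → xs <:+: ys → ys = xs

/-! ## Generators and sides -/

/-- Number of non-leaf children of `v`. -/
noncomputable def nonLeafOutdeg (N : FinDigraph) (v : ℕ) : ℕ :=
  (N.edges.filter fun e => e.1 = v ∧ ¬ N.IsLeaf e.2).card

/-- `v` is suppressed when forming the underlying generator of `N`
(after deleting all leaves it has indegree 1 and outdegree 1). -/
def Suppressed (N : FinDigraph) (v : ℕ) : Prop :=
  v ∈ N.verts ∧ ¬ N.IsLeaf v ∧ N.indeg v = 1 ∧ nonLeafOutdeg N v = 1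

/-- `v` is a node of the underlying generator of `N`. -/
def GenNode (N : FinDigraph) (v : ℕ) : Prop :=
  v ∈ N.verts ∧ ¬ N.IsLeaf v ∧ ¬ Suppressed N v

/-- `l` witnesses the edge side of the underlying generator of `N` running from the
generator node `u` to the generator node `w` (all interior vertices are suppressed). -/
def GenEdgePath (N : FinDigraph) (u w : ℕ) (l : List ℕ) : Prop :=
  GenNode N u ∧ GenNode N w ∧
  l.head? = some u ∧ l.getLast? = some w ∧ 2 ≤ l.length ∧
  l.Chain' (fun a b => (a, b) ∈ N.edges ∧ ¬ N.IsLeaf b) ∧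
  ∀ v ∈ internals l, Suppressed N v

/-- A side of a generator: an edge side or a node side. -/
inductive GenSide : Type
  | edgeSide : ℕ → ℕ → GenSide
  | nodeSide : ℕ → GenSide

/-- `s` is a side of the underlying generator of `N`. -/
def IsSideOf (N : FinDigraph) : GenSide → Prop
  | .edgeSide u w => ∃ l, GenEdgePath N u w l
  | .nodeSide v => GenNode N v ∧ 2 ≤ N.indeg v ∧ nonLeafOutdeg N v = 0

/-- The taxon `x` is on the side `s` of the underlying generator of `N`. -/
def OnSide (N : FinDigraph) (x : ℕ) : GenSide → Prop
  | .edgeSide u w =>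
      N.IsLeaf x ∧ ∃ l, GenEdgePath N u w l ∧ ∃ p ∈ internals l, (p, x) ∈ N.edges
  | .nodeSide v => N.IsLeaf x ∧ (v, x) ∈ N.edges ∧ 2 ≤ N.indeg v ∧ nonLeafOutdeg N v = 0

/-! ## Canonical Networks with Embedded Trees (CNETs) -/

/-- A canonical network with embedded trees: the DAG `H` together with, for every
tree index `i`, the edge set `emb i` of the image of the `i`-th tree, the vertex
embedding `vmap i` and the path system `pmap i` witnessing that the image is a
subdivision of the `i`-th tree. -/
structure CNET (ι : Type) where
  H : FinDigraph
  emb : ι → Finset (ℕ × ℕ)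
  vmap : ι → ℕ → ℕ
  pmap : ι → ℕ → ℕ → List ℕ

/-- Conditions (i)–(viii) of a CNET for the trees `𝒯` over the taxa `X`. -/
def IsCNET {ι : Type} (𝒯 : ι → FinDigraph) (X : Finset ℕ) (𝓗 : CNET ι) : Prop :=
  -- (i) H is a DAG
  𝓗.H.WF ∧ 𝓗.H.Acyclic ∧
  -- (ii) every root has one child
  (∀ v, 𝓗.H.IsSource v → 𝓗.H.outdeg v = 1) ∧
  -- (iii) leaves are bijectively labelled by X (labels identified with leaf names)
  𝓗.H.leaves = X ∧
  -- (iv) each emb i is an image of the tree 𝒯 i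
  (∀ i, 𝓗.emb i ⊆ 𝓗.H.edges ∧
    IsSubdivisionVia (𝒯 i) (𝓗.emb i) (𝓗.vmap i) (𝓗.pmap i)) ∧
  -- (v) every tree image contains an edge incident to a root
  (∀ i, ∃ e ∈ 𝓗.emb i, 𝓗.H.IsSource e.1) ∧
  -- (vi) every edge belongs to some tree image
  (∀ e ∈ 𝓗.H.edges, ∃ i, e ∈ 𝓗.emb i) ∧
  -- (vii) every non-leaf non-root node has exactly two children
  (∀ v ∈ 𝓗.H.verts, 𝓗.H.outdeg v ≠ 0 → 𝓗.H.indeg v ≠ 0 → 𝓗.H.outdeg v = 2) ∧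
  -- (viii) for every non-leaf non-root node some tree image contains both child edges
  (∀ v ∈ 𝓗.H.verts, 𝓗.H.outdeg v ≠ 0 → 𝓗.H.indeg v ≠ 0 →
    ∃ i, ∀ w, (v, w) ∈ 𝓗.H.edges → (v, w) ∈ 𝓗.emb i)

/-- `v` lies, after deleting all reticulation edges, in a component containing a root. -/
def RootComp (H : FinDigraph) (v : ℕ) : Prop := ∃ r, H.IsSource r ∧ DelReach H v r

/-- Equivalence of vertices used for the deletion AAF of a CNET: connectivity after
deleting reticulation edges, with all root components merged (as happens in the
hybridization network induced by the CNET). -/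
def CnetDelEquiv (H : FinDigraph) (u v : ℕ) : Prop :=
  DelReach H u v ∨ (RootComp H u ∧ RootComp H v)

/-- The deletion AAF of a CNET (the deletion forest of its induced network). -/
noncomputable def cnetDeletionAAF (H : FinDigraph) : Finset (Finset ℕ) :=
  H.leaves.image fun x => H.leaves.filter fun y => CnetDelEquiv H x y

/-- `a` and `b` are leaves (the root of `T` counted as a leaf) lying in the same
component of the deletion AAF of the CNET with network `H`. -/
def SameFBlock (H T : FinDigraph) (a b : ℕ) : Prop :=
  (H.IsLeaf a ∧ H.IsLeaf b ∧ CnetDelEquiv H a b) ∨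
  (T.IsSource a ∧ T.IsSource b) ∨
  (T.IsSource a ∧ H.IsLeaf b ∧ RootComp H b) ∨
  (T.IsSource b ∧ H.IsLeaf a ∧ RootComp H a)

/-- `I(T)`: the nodes of the tree `T` lying on no path between two leaves in the same
component of the deletion AAF of the CNET (the root of `T` counted as a leaf). -/
noncomputable def ISet {ι : Type} (𝓗 : CNET ι) (T : FinDigraph) : Finset ℕ :=
  T.verts.filter fun v => ¬ ∃ a b, SameFBlock 𝓗.H T a b ∧ OnTreePath T a b v

/-! ## Signatures of CNETs -/

/-- Vertices lying in a deletion component that contains a taxon or a root. -/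
def InFComp (H : FinDigraph) (v : ℕ) : Prop :=
  ∃ x, (H.IsLeaf x ∨ H.IsSource x) ∧ CnetDelEquiv H v x

/-- The contraction equivalence used to form the signature: the image of every
component of the deletion AAF is contracted to a single node. -/
def ContractEquiv (H : FinDigraph) (u v : ℕ) : Prop :=
  u = v ∨ (InFComp H u ∧ InFComp H v ∧ CnetDelEquiv H u v)

/-- Canonical representative of the contraction class of `v`. -/
noncomputable def kappa (H : FinDigraph) (v : ℕ) : ℕ :=
  if h : (H.verts.filter fun w => ContractEquiv H v w).Nonempty
  then (H.verts.filter fun w => ContractEquiv H v w).min' h else v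

/-- Vertex set of the signature. -/
noncomputable def sigVerts (H : FinDigraph) : Finset ℕ := H.verts.image (kappa H)

/-- Edge multiset of the signature (parallel edges are kept). -/
noncomputable def sigEdges (H : FinDigraph) : Multiset (ℕ × ℕ) :=
  (H.edges.val.map fun e => (kappa H e.1, kappa H e.2)).filter fun e => e.1 ≠ e.2

/-- Multiplicity of the signature edge `(u, v)`. -/
noncomputable def sigMult (H : FinDigraph) (u v : ℕ) : ℕ :=
  ((sigEdges H).filter fun e => e = (u, v)).card

/-- Indegree in the signature. -/
noncomputable def sigIndeg (H : FinDigraph) (v : ℕ) : ℕ :=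
  ((sigEdges H).filter fun e => e.2 = v).card

/-- Hybridization number of the signature. -/
noncomputable def sigHybNum (H : FinDigraph) : ℕ :=
  ∑ v ∈ (sigVerts H).filter (fun v => 2 ≤ sigIndeg H v), (sigIndeg H v - 1)

/-! ## Wiring guesses and descriptions -/

/-- A wiring guess for the image `H(r_C)` of a component root: the number of its parent
edges, which parent edge (if any) each tree image uses, and for each parent edge a tree
for which its top endpoint is a split node. -/
structure WiringGuess (ι : Type) where
  numParents : ℕ
  colourOf : ι → Option ℕ
  splitGuess : ℕ → ι

/-- `x` is a `T`-split node (for the tree with index `i`): both of its child edges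
belong to the image of that tree. -/
def IsTSplit {ι : Type} (𝓗 : CNET ι) (i : ι) (x : ℕ) : Prop :=
  𝓗.H.outdeg x = 2 ∧ ∀ y, (x, y) ∈ 𝓗.H.edges → (x, y) ∈ 𝓗.emb i

/-- The wiring guess `g` holds at the node `w` of the CNET `𝓗`. -/
def GuessHoldsAt {ι : Type} (𝓗 : CNET ι) (w : ℕ) (g : WiringGuess ι) : Prop :=
  ∃ e : ℕ → ℕ,
    Set.InjOn e {j | j < g.numParents} ∧
    (∀ u, (u, w) ∈ 𝓗.H.edges ↔ ∃ j < g.numParents, e j = u) ∧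
    (∀ i j, g.colourOf i = some j ↔ (j < g.numParents ∧ (e j, w) ∈ 𝓗.emb i)) ∧
    (∀ j < g.numParents, IsTSplit 𝓗 (g.splitGuess j) (e j))

/-- `v` is the image `H(r_C)` in `H` of the root of the AAF component with taxa `B`. -/
def IsCompImageRoot (H : FinDigraph) (B : Finset ℕ) (v : ℕ) : Prop :=
  v ∈ H.verts ∧ (∃ x ∈ B, CnetDelEquiv H v x) ∧ (H.indeg v = 0 ∨ 2 ≤ H.indeg v)

/-- A description `(𝒢, F*, 𝒯)`: the deletion AAF `F`, the sets `Inodes i = I(𝒯 i)`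
forming the extension of `F` to `F*`, and the wiring guesses for all component roots
(`none` exactly for the component containing the tree root). -/
structure Description (ι : Type) where
  F : Finset (Finset ℕ)
  Inodes : ι → Finset ℕ
  gF : Finset ℕ → Option (WiringGuess ι)
  gI : ι → ℕ → Option (WiringGuess ι)

/-- The CNET `𝓗` has description `D`. -/
def HasDescription {ι : Type} (𝒯 : ι → FinDigraph) (𝓗 : CNET ι) (D : Description ι) : Prop :=
  cnetDeletionAAF 𝓗.H = D.F ∧
  (∀ i, ISet 𝓗 (𝒯 i) = D.Inodes i) ∧
  (∀ B ∈ D.F,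
    (D.gF B = none ↔ ∃ x ∈ B, RootComp 𝓗.H x) ∧
    ∀ g, D.gF B = some g → ∃ v, IsCompImageRoot 𝓗.H B v ∧ GuessHoldsAt 𝓗 v g) ∧
  (∀ i, ∀ u ∈ D.Inodes i, ∃ g, D.gI i u = some g ∧ GuessHoldsAt 𝓗 (𝓗.vmap i u) g)

/-- Two CNETs are equivalent: their signatures are equal, i.e. there is a
label-preserving isomorphism between their signatures. -/
def CNETEquiv {ι : Type} (𝒯 : ι → FinDigraph) (𝓗₁ 𝓗₂ : CNET ι) : Prop :=
  ∃ θ : ℕ → ℕ,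
    Set.BijOn θ ↑(sigVerts 𝓗₁.H) ↑(sigVerts 𝓗₂.H) ∧
    (∀ u ∈ sigVerts 𝓗₁.H, ∀ v ∈ sigVerts 𝓗₁.H,
      sigMult 𝓗₂.H (θ u) (θ v) = sigMult 𝓗₁.H u v) ∧
    (∀ B ∈ cnetDeletionAAF 𝓗₁.H, ∀ v w : ℕ,
      IsCompImageRoot 𝓗₁.H B v → IsCompImageRoot 𝓗₂.H B w →
      θ (kappa 𝓗₁.H v) = kappa 𝓗₂.H w) ∧
    (∀ i : ι, ∀ u : ℕ, u ∈ ISet 𝓗₁ (𝒯 i) → u ∈ ISet 𝓗₂ (𝒯 i) →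
      θ (kappa 𝓗₁.H (𝓗₁.vmap i u)) = kappa 𝓗₂.H (𝓗₂.vmap i u))

/-! ## Counting wiring guesses (three trees) -/

/-- A structurally possible wiring guess for the image of a node of `I(T)`, where `t`
is the colour of the tree `T`: between 1 and 3 parent edges with disjoint nonempty
colour sets, at least one parent edge of colour `t`, and each split guess taken from
the colour set of the corresponding parent edge. -/
def ValidGuessI (t : Fin 3) (g : WiringGuess (Fin 3)) : Prop :=
  1 ≤ g.numParents ∧ g.numParents ≤ 3 ∧
  (∀ i j, g.colourOf i = some j → j < g.numParents) ∧
  (∀ j < g.numParents, ∃ i, g.colourOf i = some j) ∧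
  g.colourOf t ≠ none ∧
  (∀ j < g.numParents, g.colourOf (g.splitGuess j) = some j)

/-- A structurally possible wiring guess for the image of an AAF component root:
additionally, the union of the colour sets of the parent edges contains all colours. -/
def ValidGuessF (g : WiringGuess (Fin 3)) : Prop :=
  1 ≤ g.numParents ∧ g.numParents ≤ 3 ∧
  (∀ i j, g.colourOf i = some j → j < g.numParents) ∧
  (∀ j < g.numParents, ∃ i, g.colourOf i = some j) ∧
  (∀ i, g.colourOf i ≠ none) ∧
  (∀ j < g.numParents, g.colourOf (g.splitGuess j) = some j)

/-- Two wiring guesses are the same up to renumbering the parent edges. -/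
def GuessIso {ι : Type} (g g' : WiringGuess ι) : Prop :=
  g.numParents = g'.numParents ∧
  ∃ σ : ℕ → ℕ,
    Set.BijOn σ {j | j < g.numParents} {j | j < g.numParents} ∧
    (∀ i, g'.colourOf i = (g.colourOf i).map σ) ∧
    (∀ j < g.numParents, g'.splitGuess (σ j) = g.splitGuess j)

/-! ## Taxa reachable avoiding reticulations -/

/-- There is a directed path from `r` to `x` meeting no reticulation apart
possibly from `r` itself. -/
def PathAvoidRetic (N : FinDigraph) (r x : ℕ) : Prop :=
  ∃ l : List ℕ, l.head? = some r ∧ l.getLast? = some x ∧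
    l.Chain' (fun a b => (a, b) ∈ N.edges) ∧
    ∀ v ∈ l.tail, ¬ N.IsRetic v

/-- `X(r)`: the taxa reachable from `r` by directed paths meeting no reticulation
apart from `r`. -/
noncomputable def XrSet (N : FinDigraph) (r : ℕ) : Finset ℕ :=
  N.leaves.filter fun x => PathAvoidRetic N r x

/-! ## Forests obtained by deleting edges of a tree -/

/-- The partition of the taxa of `T` induced by the connected components of `T`
after deleting the edge set `D`. -/
noncomputable def forestFromDeletion (T : FinDigraph) (D : Finset (ℕ × ℕ)) :
    Finset (Finset ℕ) :=
  T.leaves.image fun x => T.leaves.filter fun y =>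
    Relation.ReflTransGen
      (fun a b => ((a, b) ∈ T.edges ∧ (a, b) ∉ D) ∨ ((b, a) ∈ T.edges ∧ (b, a) ∉ D)) x y

/-! ### Auxiliary development for Statement 8 -/

namespace S8

open Finset Relation

/-! #### Generic digraph lemmas -/

lemma reaches_antisymm {G : FinDigraph} (hAc : G.Acyclic) {x y : ℕ}
    (hxy : G.Reaches x y) (hyx : G.Reaches y x) : x = y := by
  rcases Relation.ReflTransGen.cases_head hxy with rfl | ⟨z, hxz, hzy⟩
  · rfl
  · exact absurd (hzy.trans hyx) (hAc _ _ hxz)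

lemma no_self_edge {G : FinDigraph} (hAc : G.Acyclic) {x : ℕ} (h : (x, x) ∈ G.edges) :
    False := hAc x x h Relation.ReflTransGen.refl

lemma mem_verts_of_reaches_ne {G : FinDigraph} (hWF : G.WF) {x y : ℕ}
    (h : G.Reaches x y) (hne : x ≠ y) : x ∈ G.verts := by
  rcases Relation.ReflTransGen.cases_head h with rfl | ⟨z, hxz, _⟩
  · exact absurd rfl hne
  · exact (hWF _ hxz).1

/-- Number of ancestors (in `verts`) of `v`, including `v` itself when `v ∈ verts`. -/
noncomputable def anc (G : FinDigraph) (v : ℕ) : ℕ :=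
  (G.verts.filter fun w => G.Reaches w v).card

lemma anc_lt {G : FinDigraph} (hAc : G.Acyclic) {u v : ℕ}
    (hu : G.Reaches u v) (hne : u ≠ v) (hv : v ∈ G.verts) : anc G u < anc G v := by
  apply Finset.card_lt_card
  constructor
  · intro w hw
    rw [Finset.mem_filter] at hw ⊢
    exact ⟨hw.1, hw.2.trans hu⟩
  · intro hsub
    have : v ∈ G.verts.filter fun w => G.Reaches w u := hsub (by
      rw [Finset.mem_filter]; exact ⟨hv, Relation.ReflTransGen.refl⟩)
    rw [Finset.mem_filter] at this
    exact hne (reaches_antisymm hAc hu this.2)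

lemma indeg_pos_of_edge {G : FinDigraph} {x v : ℕ} (h : (x, v) ∈ G.edges) :
    1 ≤ G.indeg v := by
  apply Finset.card_pos.mpr
  exact ⟨(x, v), by simp [h]⟩

/-! #### Tree lemmas -/

section Tree

variable {T : FinDigraph} {ρ : ℕ}

/-- Bundle of the tree hypotheses we use. -/
structure TreeH (T : FinDigraph) (ρ : ℕ) : Prop where
  wf : T.WF
  ac : T.Acyclic
  src : T.IsSource ρ
  rr : ∀ v ∈ T.verts, T.Reaches ρ v
  deg : ∀ v ∈ T.verts, T.indeg v = 0 ∨ (T.indeg v = 1 ∧ (T.outdeg v = 0 ∨ T.outdeg v = 2))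

lemma TreeH.eq_root (h : TreeH T ρ) {v : ℕ} (hv : v ∈ T.verts) (h0 : T.indeg v = 0) :
    v = ρ := by
  rcases Relation.ReflTransGen.cases_tail (h.rr v hv) with rfl | ⟨c, _, hcv⟩
  · rfl
  · exact absurd h0 (by have := indeg_pos_of_edge hcv; omega)

lemma TreeH.indeg_one (h : TreeH T ρ) {v : ℕ} (hv : v ∈ T.verts) (hne : v ≠ ρ) :
    T.indeg v = 1 := by
  rcases h.deg v hv with h0 | ⟨h1, _⟩
  · exact absurd (h.eq_root hv h0) hne
  · exact h1

lemma TreeH.in_edge_exists (h : TreeH T ρ) {v : ℕ} (hv : v ∈ T.verts) (hne : v ≠ ρ) :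
    ∃ x, (x, v) ∈ T.edges := by
  have h1 := h.indeg_one hv hne
  have : (T.edges.filter fun e => e.2 = v).Nonempty := Finset.card_pos.mp (by
    rw [show (T.edges.filter fun e => e.2 = v).card = T.indeg v from rfl, h1]; omega)
  obtain ⟨e, he⟩ := this
  rw [Finset.mem_filter] at he
  exact ⟨e.1, by rw [show (e.1, v) = e from by rw [← he.2]]; exact he.1⟩

lemma TreeH.in_edge_unique (h : TreeH T ρ) {x x' v : ℕ}
    (hx : (x, v) ∈ T.edges) (hx' : (x', v) ∈ T.edges) : x = x' := by
  by_contra hne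
  have hv : v ∈ T.verts := (h.wf _ hx).2
  have h2 : 2 ≤ T.indeg v := by
    apply Finset.one_lt_card.mpr
    exact ⟨(x, v), by simp [hx], (x', v), by simp [hx'], by simp [hne]⟩
  rcases h.deg v hv with h0 | ⟨h1, _⟩ <;> omega

lemma TreeH.reaches_in_edge (h : TreeH T ρ) {s v x : ℕ}
    (hs : T.Reaches s v) (hne : s ≠ v) (hx : (x, v) ∈ T.edges) : T.Reaches s x := by
  rcases Relation.ReflTransGen.cases_tail hs with rfl | ⟨c, hsc, hcv⟩
  · exact absurd rfl hne.symm
  · rwa [h.in_edge_unique hx hcv]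

lemma TreeH.reaches_comparable (h : TreeH T ρ) {w w' : ℕ} :
    ∀ n v, anc T v ≤ n → v ∈ T.verts → T.Reaches w v → T.Reaches w' v →
      T.Reaches w w' ∨ T.Reaches w' w := by
  intro n
  induction n with
  | zero =>
    intro v hv hvm hw hw'
    by_cases h1 : w = v
    · subst h1; exact Or.inr hw'
    by_cases h2 : w' = v
    · subst h2; exact Or.inl hw
    rcases Relation.ReflTransGen.cases_tail hw with rfl | ⟨c, hwc, hcv⟩
    · exact absurd rfl h1
    have hcv' : T.Reaches c v := Relation.ReflTransGen.single hcv
    have hcne : c ≠ v := fun hh => no_self_edge h.ac (hh ▸ hcv)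
    have := anc_lt h.ac hcv' hcne hvm
    omega
  | succ n ih =>
    intro v hv hvm hw hw'
    by_cases h1 : w = v
    · subst h1; exact Or.inr hw'
    by_cases h2 : w' = v
    · subst h2; exact Or.inl hw
    rcases Relation.ReflTransGen.cases_tail hw with rfl | ⟨c, hwc, hcv⟩
    · exact absurd rfl h1
    rcases Relation.ReflTransGen.cases_tail hw' with rfl | ⟨c', hwc', hcv'⟩
    · exact absurd rfl h2
    have hcc : c' = c := h.in_edge_unique hcv' hcv
    rw [hcc] at hwc'
    have hcvr : T.Reaches c v := Relation.ReflTransGen.single hcv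
    have hcne : c ≠ v := fun hh => no_self_edge h.ac (hh ▸ hcv)
    have hlt := anc_lt h.ac hcvr hcne hvm
    exact ih c (by omega) (h.wf _ hcv).1 hwc hwc'

lemma TreeH.lca_exists (h : TreeH T ρ) {a b : ℕ} (ha : a ∈ T.verts) (hb : b ∈ T.verts) :
    ∃ u, T.Reaches u a ∧ T.Reaches u b ∧
      ∀ w, T.Reaches w a → T.Reaches w b → T.Reaches w u := by
  set CA := T.verts.filter fun w => T.Reaches w a ∧ T.Reaches w b with hCA
  have hne : CA.Nonempty := ⟨ρ, by
    rw [hCA, Finset.mem_filter]; exact ⟨h.src.1, h.rr a ha, h.rr b hb⟩⟩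
  obtain ⟨u, huCA, hmax⟩ := CA.exists_max_image (anc T) hne
  rw [hCA, Finset.mem_filter] at huCA
  refine ⟨u, huCA.2.1, huCA.2.2, ?_⟩
  intro w hwa hwb
  have hwv : w ∈ T.verts := by
    by_cases hwa' : w = a
    · exact hwa' ▸ ha
    · exact mem_verts_of_reaches_ne h.wf hwa hwa'
  have hwCA : w ∈ CA := by rw [hCA, Finset.mem_filter]; exact ⟨hwv, hwa, hwb⟩
  rcases h.reaches_comparable (anc T a) a le_rfl ha hwa huCA.2.1 with hwu | huw
  · exact hwu
  · by_cases he : u = w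
    · exact he ▸ Relation.ReflTransGen.refl
    · have := anc_lt h.ac huw he hwv
      have := hmax w hwCA
      omega

end Tree

/-! #### Covering machinery -/

section Cover

variable (H T : FinDigraph)

def Cov (v : ℕ) : Prop := ∃ a b, SameFBlock H T a b ∧ OnTreePath T a b v

noncomputable def coveredSet : Finset ℕ := T.verts.filter (Cov H T)

def CStep (x y : ℕ) : Prop :=
  ((x, y) ∈ T.edges ∨ (y, x) ∈ T.edges) ∧ Cov H T x ∧ Cov H T y

def CConn : ℕ → ℕ → Prop := Relation.ReflTransGen (CStep H T)

noncomputable def cls (v : ℕ) : Finset ℕ := (coveredSet H T).filter (CConn H T v)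

noncomputable def comps : Finset (Finset ℕ) := (coveredSet H T).image (cls H T)

noncomputable def part (v : ℕ) : Finset ℕ := if Cov H T v then cls H T v else {v}

noncomputable def crossE : Finset (ℕ × ℕ) :=
  T.edges.filter fun e => part H T e.1 ≠ part H T e.2

variable {H T}

lemma cconn_symm {x y : ℕ} (h : CConn H T x y) : CConn H T y x := by
  induction h with
  | refl => exact .refl
  | tail _ hstep ih =>
      exact Relation.ReflTransGen.head ⟨hstep.1.symm, hstep.2.2, hstep.2.1⟩ ih

lemma cls_eq_of_cconn {x y : ℕ} (h : CConn H T x y) : cls H T x = cls H T y := by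
  ext z
  simp only [cls, Finset.mem_filter, and_congr_right_iff]
  intro _
  exact ⟨fun hz => Relation.ReflTransGen.trans (cconn_symm h) hz,
         fun hz => Relation.ReflTransGen.trans h hz⟩

lemma mem_cls {z v : ℕ} : z ∈ cls H T v ↔ z ∈ coveredSet H T ∧ CConn H T v z :=
  Finset.mem_filter

lemma sameFBlock_fst {a b : ℕ} (h : SameFBlock H T a b) : H.IsLeaf a ∨ T.IsSource a := by
  rcases h with ⟨h1, _, _⟩ | ⟨h1, _⟩ | ⟨h1, _, _⟩ | ⟨_, h1, _⟩
  · exact Or.inl h1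
  · exact Or.inr h1
  · exact Or.inr h1
  · exact Or.inl h1

lemma hleaf_mem {x : ℕ} (hleq : T.leaves = H.leaves) (hx : H.IsLeaf x) :
    x ∈ T.verts ∧ T.outdeg x = 0 := by
  have hmem : x ∈ H.leaves := Finset.mem_filter.mpr ⟨hx.1, hx.2⟩
  rw [← hleq] at hmem
  exact Finset.mem_filter.mp hmem

lemma sfb_mem_verts {a b : ℕ} (hleq : T.leaves = H.leaves) (h : SameFBlock H T a b) :
    a ∈ T.verts ∧ b ∈ T.verts := by
  constructor
  · rcases sameFBlock_fst h with hl | hs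
    · exact (hleaf_mem hleq hl).1
    · exact hs.1
  · rcases h with ⟨_, h1, _⟩ | ⟨_, h1⟩ | ⟨_, h1, _⟩ | ⟨h1, _, _⟩
    · exact (hleaf_mem hleq h1).1
    · exact h1.1
    · exact (hleaf_mem hleq h1).1
    · exact h1.1

lemma cov_mem_verts {ρ : ℕ} (h : TreeH T ρ) (hleq : T.leaves = H.leaves) {v : ℕ}
    (hc : Cov H T v) : v ∈ T.verts := by
  obtain ⟨a, b, hsf, hp⟩ := hc
  have hav := (sfb_mem_verts hleq hsf).1
  have hbv := (sfb_mem_verts hleq hsf).2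
  have key : ∀ w : ℕ, w ∈ T.verts → T.Reaches v w → v ∈ T.verts := by
    intro w hw hr
    by_cases hvw : v = w
    · exact hvw ▸ hw
    · exact mem_verts_of_reaches_ne h.wf hr hvw
  rcases hp with ⟨hva, _⟩ | ⟨hvb, _⟩ | ⟨hva, _, _⟩
  · exact key a hav hva
  · exact key b hbv hvb
  · exact key a hav hva

lemma onTreePath_self_left {a b : ℕ} : OnTreePath T a b a := by
  by_cases h : T.Reaches a b
  · exact Or.inr (Or.inr ⟨Relation.ReflTransGen.refl, h, fun w hw _ => hw⟩)
  · exact Or.inl ⟨Relation.ReflTransGen.refl, h⟩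

lemma onTreePath_self_right {a b : ℕ} : OnTreePath T a b b := by
  by_cases h : T.Reaches b a
  · exact Or.inr (Or.inr ⟨h, Relation.ReflTransGen.refl, fun w _ hw => hw⟩)
  · exact Or.inr (Or.inl ⟨Relation.ReflTransGen.refl, h⟩)

lemma cov_root {ρ : ℕ} (h : TreeH T ρ) : Cov H T ρ :=
  ⟨ρ, ρ, Or.inr (Or.inl ⟨h.src, h.src⟩), onTreePath_self_left⟩

lemma cov_leaf {x : ℕ} (hleq : T.leaves = H.leaves) (hx : x ∈ T.leaves) : Cov H T x := by
  have hxH : H.IsLeaf x := by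
    rw [hleq] at hx
    exact ⟨(Finset.mem_filter.mp hx).1, (Finset.mem_filter.mp hx).2⟩
  exact ⟨x, x, Or.inl ⟨hxH, hxH, Or.inl Relation.ReflTransGen.refl⟩, onTreePath_self_left⟩

lemma descend {ρ : ℕ} (h : TreeH T ρ) {a b v : ℕ} (hv : T.Reaches v a) :
    OnTreePath T a b v →
    Relation.ReflTransGen (fun x y =>
      ((x, y) ∈ T.edges ∨ (y, x) ∈ T.edges) ∧ OnTreePath T a b x ∧ OnTreePath T a b y) v a := by
  induction hv using Relation.ReflTransGen.head_induction_on with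
  | refl => exact fun _ => Relation.ReflTransGen.refl
  | head hxc hca ih =>
    intro hpx
    rename_i x c
    rcases hpx with ⟨hxa, hxb⟩ | ⟨hxb, hxa⟩ | ⟨hxa, hxb, hmin⟩
    · have hpc : OnTreePath T a b c :=
        Or.inl ⟨hca, fun hcb => hxb (Relation.ReflTransGen.head hxc hcb)⟩
      exact Relation.ReflTransGen.head ⟨Or.inl hxc, Or.inl ⟨hxa, hxb⟩, hpc⟩ (ih hpc)
    · exact absurd (Relation.ReflTransGen.head hxc hca) hxa
    · by_cases hcb : T.Reaches c b
      · exact absurd (hmin c hca hcb) (h.ac x c hxc)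
      · have hpc : OnTreePath T a b c := Or.inl ⟨hca, hcb⟩
        exact Relation.ReflTransGen.head
          ⟨Or.inl hxc, Or.inr (Or.inr ⟨hxa, hxb, hmin⟩), hpc⟩ (ih hpc)

lemma ascend {ρ : ℕ} (h : TreeH T ρ) {a b u : ℕ} (hua : T.Reaches u a) (hub : T.Reaches u b)
    (hmin : ∀ w, T.Reaches w a → T.Reaches w b → T.Reaches w u) :
    ∀ n v, anc T v ≤ n → T.Reaches u v → T.Reaches v b → ¬ T.Reaches v a →
      Relation.ReflTransGen (fun x y =>
        ((x, y) ∈ T.edges ∨ (y, x) ∈ T.edges) ∧ OnTreePath T a b x ∧ OnTreePath T a b y) v u := by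
  intro n
  induction n with
  | zero =>
    intro v hvm huv hvb hva
    by_cases he : v = u
    · subst he; exact Relation.ReflTransGen.refl
    rcases Relation.ReflTransGen.cases_tail huv with rfl | ⟨c, huc, hcv⟩
    · exact absurd rfl he
    have hcvr := Relation.ReflTransGen.single hcv
    have hcne : c ≠ v := fun hh => no_self_edge h.ac (hh ▸ hcv)
    have hvv : v ∈ T.verts := (h.wf _ hcv).2
    have := anc_lt h.ac hcvr hcne hvv
    omega
  | succ n ih =>
    intro v hvm huv hvb hva
    by_cases he : v = u
    · subst he; exact Relation.ReflTransGen.refl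
    rcases Relation.ReflTransGen.cases_tail huv with rfl | ⟨c, huc, hcv⟩
    · exact absurd rfl he
    have hcb : T.Reaches c b := Relation.ReflTransGen.head hcv hvb
    have hpv : OnTreePath T a b v := Or.inr (Or.inl ⟨hvb, hva⟩)
    by_cases hca : T.Reaches c a
    · have hcu : c = u := reaches_antisymm h.ac (hmin c hca hcb) huc
      subst hcu
      exact Relation.ReflTransGen.head
        ⟨Or.inr hcv, hpv, Or.inr (Or.inr ⟨hua, hub, hmin⟩)⟩ Relation.ReflTransGen.refl
    · have hpc : OnTreePath T a b c := Or.inr (Or.inl ⟨hcb, hca⟩)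
      have hcvr := Relation.ReflTransGen.single hcv
      have hcne : c ≠ v := fun hh => no_self_edge h.ac (hh ▸ hcv)
      have hvv : v ∈ T.verts := (h.wf _ hcv).2
      have hlt := anc_lt h.ac hcvr hcne hvv
      exact Relation.ReflTransGen.head ⟨Or.inr hcv, hpv, hpc⟩ (ih c (by omega) huc hcb hca)

lemma master {ρ : ℕ} (h : TreeH T ρ) (hleq : T.leaves = H.leaves)
    {a b v : ℕ} (hsf : SameFBlock H T a b) (hp : OnTreePath T a b v) :
    CConn H T v a := by
  have hmono : ∀ {x y : ℕ},
      Relation.ReflTransGen (fun x y =>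
        ((x, y) ∈ T.edges ∨ (y, x) ∈ T.edges) ∧ OnTreePath T a b x ∧ OnTreePath T a b y) x y →
      CConn H T x y :=
    fun hc => Relation.ReflTransGen.mono (p := CStep H T)
      (fun x y hh => ⟨hh.1, ⟨a, b, hsf, hh.2.1⟩, ⟨a, b, hsf, hh.2.2⟩⟩) _ _ hc
  have hav : a ∈ T.verts := (sfb_mem_verts hleq hsf).1
  have hbv : b ∈ T.verts := (sfb_mem_verts hleq hsf).2
  rcases hp with ⟨hva, hvb⟩ | ⟨hvb, hva⟩ | ⟨hva, hvb, hmin⟩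
  · exact hmono (descend h hva (Or.inl ⟨hva, hvb⟩))
  · obtain ⟨u, hua, hub, hmin⟩ := h.lca_exists hav hbv
    have huv : T.Reaches u v := by
      rcases h.reaches_comparable (anc T b) b le_rfl hbv hvb hub with hvu | huv
      · exact absurd (hvu.trans hua) hva
      · exact huv
    have c1 := ascend h hua hub hmin (anc T v) v le_rfl huv hvb hva
    have c2 := descend h hua (Or.inr (Or.inr ⟨hua, hub, hmin⟩))
    exact Relation.ReflTransGen.trans (hmono c1) (hmono c2)
  · exact hmono (descend h hva (Or.inr (Or.inr ⟨hva, hvb, hmin⟩)))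

end Cover

/-! #### Counting on the tree side -/

section Count

variable {H T : FinDigraph} {ρ : ℕ}

lemma edges_card (h : TreeH T ρ) : T.edges.card + 1 = T.verts.card := by
  have hfib : T.edges.card = ∑ v ∈ T.verts, (T.edges.filter fun e => e.2 = v).card :=
    Finset.card_eq_sum_card_fiberwise (fun e he => (h.wf e he).2)
  have hρm : ρ ∈ T.verts := h.src.1
  have hsum : ∑ v ∈ T.verts.erase ρ, (T.edges.filter fun e => e.2 = v).card + T.indeg ρ
      = ∑ v ∈ T.verts, (T.edges.filter fun e => e.2 = v).card :=
    Finset.sum_erase_add _ _ hρm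
  have hz : T.indeg ρ = 0 := h.src.2
  have hones : ∀ v ∈ T.verts.erase ρ, (T.edges.filter fun e => e.2 = v).card = 1 := by
    intro v hv
    exact h.indeg_one (Finset.mem_of_mem_erase hv) (Finset.ne_of_mem_erase hv)
  rw [hfib, ← hsum, hz, Finset.sum_congr rfl hones, add_zero, Finset.sum_const,
    smul_eq_mul, mul_one]
  exact Finset.card_erase_add_one hρm

def IsApex (H T : FinDigraph) (y : ℕ) : Prop :=
  Cov H T y ∧ ∀ x, (x, y) ∈ T.edges → ¬ Cov H T x

lemma apex_reaches (h : TreeH T ρ) {y z : ℕ} (hy : IsApex H T y) (hc : CConn H T y z) :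
    T.Reaches y z := by
  induction hc with
  | refl => exact Relation.ReflTransGen.refl
  | @tail c z' hyc' hstep ih =>
    rcases hstep.1 with he | he
    · exact ih.tail he
    · by_cases hyc : y = c
      · subst hyc
        exact absurd hstep.2.2 (hy.2 z' he)
      · exact h.reaches_in_edge ih hyc he

lemma cls_mem_of_mem {C : Finset ℕ} (hC : C ∈ comps H T) {x : ℕ} (hx : x ∈ C) :
    cls H T x = C ∧ x ∈ coveredSet H T := by
  obtain ⟨v₀, hv₀, rfl⟩ := Finset.mem_image.mp hC
  have hx' := mem_cls.mp hx
  exact ⟨(cls_eq_of_cconn hx'.2).symm, hx'.1⟩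

lemma comps_nonempty_mem {C : Finset ℕ} (hC : C ∈ comps H T) : C.Nonempty := by
  obtain ⟨v₀, hv₀, rfl⟩ := Finset.mem_image.mp hC
  exact ⟨v₀, mem_cls.mpr ⟨hv₀, Relation.ReflTransGen.refl⟩⟩

lemma comps_disjoint {C C' : Finset ℕ} (hC : C ∈ comps H T) (hC' : C' ∈ comps H T)
    {w : ℕ} (hw : w ∈ C) (hw' : w ∈ C') : C = C' := by
  rw [← (cls_mem_of_mem hC hw).1, ← (cls_mem_of_mem hC' hw').1]

lemma apex_exists (h : TreeH T ρ) {C : Finset ℕ} (hC : C ∈ comps H T) :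
    ∃ y ∈ C, IsApex H T y := by
  obtain ⟨y, hyC, hmin⟩ := C.exists_min_image (anc T) (comps_nonempty_mem hC)
  obtain ⟨hcls, hyc'⟩ := cls_mem_of_mem hC hyC
  have hycov : Cov H T y := (Finset.mem_filter.mp hyc').2
  refine ⟨y, hyC, hycov, ?_⟩
  intro x hxy hxcov
  have hxC : x ∈ C := by
    rw [← hcls]
    exact mem_cls.mpr ⟨Finset.mem_filter.mpr ⟨(h.wf _ hxy).1, hxcov⟩,
      Relation.ReflTransGen.single ⟨Or.inr hxy, hycov, hxcov⟩⟩
  have hxr : T.Reaches x y := Relation.ReflTransGen.single hxy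
  have hne : x ≠ y := fun hh => no_self_edge h.ac (hh ▸ hxy)
  have h1 := anc_lt h.ac hxr hne (h.wf _ hxy).2
  have h2 := hmin x hxC
  omega

lemma apex_card (h : TreeH T ρ) :
    ((coveredSet H T).filter fun y => ∀ x, (x, y) ∈ T.edges → ¬ Cov H T x).card
      = (comps H T).card := by
  apply Finset.card_bij (fun y _ => cls H T y)
  · intro y hy
    exact Finset.mem_image.mpr ⟨y, (Finset.mem_filter.mp hy).1, rfl⟩
  · intro y hy y' hy' hcls
    rw [Finset.mem_filter] at hy hy'
    have hay : IsApex H T y := ⟨(Finset.mem_filter.mp hy.1).2, hy.2⟩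
    have hay' : IsApex H T y' := ⟨(Finset.mem_filter.mp hy'.1).2, hy'.2⟩
    have hyy' : CConn H T y y' := by
      have hmem : y' ∈ cls H T y' := mem_cls.mpr ⟨hy'.1, Relation.ReflTransGen.refl⟩
      rw [← hcls] at hmem
      exact (mem_cls.mp hmem).2
    exact reaches_antisymm h.ac (apex_reaches h hay hyy')
      (apex_reaches h hay' (cconn_symm hyy'))
  · intro C hC
    obtain ⟨y, hyC, hapex⟩ := apex_exists h hC
    exact ⟨y, Finset.mem_filter.mpr ⟨(cls_mem_of_mem hC hyC).2, hapex.2⟩,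
      (cls_mem_of_mem hC hyC).1⟩

lemma part_self_mem (h : TreeH T ρ) (hleq : T.leaves = H.leaves) {v : ℕ}
    (hcov : Cov H T v) : v ∈ part H T v := by
  rw [part, if_pos hcov]
  exact mem_cls.mpr ⟨Finset.mem_filter.mpr ⟨cov_mem_verts h hleq hcov, hcov⟩,
    Relation.ReflTransGen.refl⟩

lemma nc_cov (h : TreeH T ρ) (hleq : T.leaves = H.leaves) {x y : ℕ}
    (he : (x, y) ∈ T.edges) (hp : part H T x = part H T y) :
    Cov H T x ∧ Cov H T y ∧ CConn H T x y := by
  have hne : x ≠ y := fun hh => no_self_edge h.ac (hh ▸ he)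
  by_cases hcx : Cov H T x
  · by_cases hcy : Cov H T y
    · refine ⟨hcx, hcy, ?_⟩
      have hmem : y ∈ part H T y := part_self_mem h hleq hcy
      rw [← hp, part, if_pos hcx] at hmem
      exact (mem_cls.mp hmem).2
    · exfalso
      have hmem : x ∈ part H T x := part_self_mem h hleq hcx
      rw [hp, part, if_neg hcy, Finset.mem_singleton] at hmem
      exact hne hmem
  · exfalso
    by_cases hcy : Cov H T y
    · have hmem : y ∈ part H T y := part_self_mem h hleq hcy
      rw [← hp, part, if_neg hcx, Finset.mem_singleton] at hmem
      exact hne hmem.symm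
    · have hsing : ({x} : Finset ℕ) = {y} := by
        rw [part, part, if_neg hcx, if_neg hcy] at hp
        exact hp
      exact hne (Finset.singleton_injective hsing)

lemma part_eq_of_adj {x y : ℕ} (he : (x, y) ∈ T.edges)
    (hcx : Cov H T x) (hcy : Cov H T y) : part H T x = part H T y := by
  rw [part, part, if_pos hcx, if_pos hcy]
  exact cls_eq_of_cconn (Relation.ReflTransGen.single ⟨Or.inl he, hcx, hcy⟩)

lemma uncov_edge_cross (h : TreeH T ρ) (hleq : T.leaves = H.leaves) {x y : ℕ}
    (he : (x, y) ∈ T.edges) (hx : ¬ Cov H T x ∨ ¬ Cov H T y) :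
    part H T x ≠ part H T y := by
  intro heq
  have hcc := nc_cov h hleq he heq
  rcases hx with hx | hx
  · exact hx hcc.1
  · exact hx hcc.2.1

lemma nc_card (h : TreeH T ρ) (hleq : T.leaves = H.leaves) :
    (T.edges.filter fun e => part H T e.1 = part H T e.2).card
      = ((coveredSet H T).filter fun y => ¬ ∀ x, (x, y) ∈ T.edges → ¬ Cov H T x).card := by
  apply Finset.card_bij (fun e _ => e.2)
  · intro e he
    rw [Finset.mem_filter] at he
    obtain ⟨he1, he2⟩ := he
    have hxy := nc_cov h hleq (x := e.1) (y := e.2) (by rwa [Prod.mk.eta]) he2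
    rw [Finset.mem_filter]
    refine ⟨Finset.mem_filter.mpr ⟨(h.wf _ he1).2, hxy.2.1⟩, ?_⟩
    push_neg
    exact ⟨e.1, by rwa [Prod.mk.eta], hxy.1⟩
  · intro e he e' he' h2
    rw [Finset.mem_filter] at he he'
    have he1 : (e.1, e.2) ∈ T.edges := by rw [Prod.mk.eta]; exact he.1
    have he1' : (e'.1, e.2) ∈ T.edges := by rw [h2, Prod.mk.eta]; exact he'.1
    have := h.in_edge_unique he1 he1'
    exact Prod.ext this h2
  · intro y hy
    rw [Finset.mem_filter] at hy
    obtain ⟨hyc, hcond⟩ := hy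
    push_neg at hcond
    obtain ⟨x, hxy, hcovx⟩ := hcond
    refine ⟨(x, y), Finset.mem_filter.mpr ⟨hxy, ?_⟩, rfl⟩
    exact part_eq_of_adj hxy hcovx (Finset.mem_filter.mp hyc).2

lemma cross_nc_split :
    (crossE H T).card + (T.edges.filter fun e => part H T e.1 = part H T e.2).card
      = T.edges.card := by
  have h0 := Finset.card_filter_add_card_filter_not
    (s := T.edges) (p := fun e => part H T e.1 = part H T e.2)
  have h1 : crossE H T = T.edges.filter fun a => ¬ part H T a.1 = part H T a.2 := rfl
  rw [h1]
  omega

noncomputable def crossdeg (H T : FinDigraph) (v : ℕ) : ℕ :=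
  ((crossE H T).filter fun e => e.1 = v).card + ((crossE H T).filter fun e => e.2 = v).card

lemma cross_sum (h : TreeH T ρ) :
    2 * (crossE H T).card = ∑ v ∈ T.verts, crossdeg H T v := by
  have hsub : ∀ e ∈ crossE H T, e ∈ T.edges := fun e he => (Finset.mem_filter.mp he).1
  have h1 : (crossE H T).card = ∑ v ∈ T.verts, ((crossE H T).filter fun e => e.1 = v).card :=
    Finset.card_eq_sum_card_fiberwise (fun e he => (h.wf e (hsub e he)).1)
  have h2 : (crossE H T).card = ∑ v ∈ T.verts, ((crossE H T).filter fun e => e.2 = v).card :=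
    Finset.card_eq_sum_card_fiberwise (fun e he => (h.wf e (hsub e he)).2)
  unfold crossdeg
  rw [Finset.sum_add_distrib, ← h1, ← h2, two_mul]

lemma I_crossdeg (h : TreeH T ρ) (hleq : T.leaves = H.leaves) {u : ℕ}
    (hu : u ∈ T.verts) (hnc : ¬ Cov H T u) : crossdeg H T u = 3 := by
  have hne : u ≠ ρ := fun hh => hnc (hh ▸ cov_root h)
  have hnl : T.outdeg u ≠ 0 := fun h0 =>
    hnc (cov_leaf hleq (Finset.mem_filter.mpr ⟨hu, h0⟩))
  have hind : T.indeg u = 1 := h.indeg_one hu hne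
  have hout : T.outdeg u = 2 := by
    rcases h.deg u hu with h0 | ⟨_, h2 | h2⟩
    · omega
    · exact absurd h2 hnl
    · exact h2
  have hall1 : (crossE H T).filter (fun e => e.1 = u) = T.edges.filter (fun e => e.1 = u) := by
    ext e
    simp only [crossE, Finset.filter_filter, Finset.mem_filter]
    constructor
    · tauto
    · rintro ⟨he, h1⟩
      refine ⟨he, ?_, h1⟩
      exact uncov_edge_cross h hleq (x := e.1) (y := e.2) (by rwa [Prod.mk.eta])
        (Or.inl (h1 ▸ hnc))
  have hall2 : (crossE H T).filter (fun e => e.2 = u) = T.edges.filter (fun e => e.2 = u) := by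
    ext e
    simp only [crossE, Finset.filter_filter, Finset.mem_filter]
    constructor
    · tauto
    · rintro ⟨he, h1⟩
      refine ⟨he, ?_, h1⟩
      exact uncov_edge_cross h hleq (x := e.1) (y := e.2) (by rwa [Prod.mk.eta])
        (Or.inr (h1 ▸ hnc))
  unfold crossdeg
  rw [hall1, hall2]
  have : (T.edges.filter fun e => e.1 = u).card = T.outdeg u := rfl
  have : (T.edges.filter fun e => e.2 = u).card = T.indeg u := rfl
  omega

lemma mem_of_part_eq {C : Finset ℕ} (hC : C ∈ comps H T) {p : ℕ}
    (hpv : p ∈ T.verts) (hp : part H T p = C) : p ∈ C ∧ Cov H T p := by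
  by_cases hc : Cov H T p
  · refine ⟨?_, hc⟩
    rw [← hp, part, if_pos hc]
    exact mem_cls.mpr ⟨Finset.mem_filter.mpr ⟨hpv, hc⟩, Relation.ReflTransGen.refl⟩
  · exfalso
    obtain ⟨v₀, hv₀m, rfl⟩ := Finset.mem_image.mp hC
    have hv₀C : v₀ ∈ cls H T v₀ := mem_cls.mpr ⟨hv₀m, Relation.ReflTransGen.refl⟩
    rw [← hp, part, if_neg hc, Finset.mem_singleton] at hv₀C
    exact hc (hv₀C ▸ (Finset.mem_filter.mp hv₀m).2)

lemma cross_exit {C : Finset ℕ} {x z : ℕ} (hxz : T.Reaches x z) :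
    part H T x = C → part H T z ≠ C →
      ∃ p q, (p, q) ∈ T.edges ∧ part H T p = C ∧ part H T q ≠ C := by
  induction hxz using Relation.ReflTransGen.head_induction_on with
  | refl => intro h1 h2; exact absurd h1 h2
  | @head p c hac hcz ih =>
    intro hp hz
    by_cases hc : part H T c = C
    · exact ih hc hz
    · exact ⟨p, c, hac, hp, hc⟩

lemma comp_witness (h : TreeH T ρ) (hleq : T.leaves = H.leaves) {u₀ : ℕ}
    (hu₀ : u₀ ∈ T.verts) (hu₀c : ¬ Cov H T u₀)
    {C : Finset ℕ} (hC : C ∈ comps H T) :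
    ∃ w, w ∈ C ∧ 1 ≤ crossdeg H T w := by
  obtain ⟨y, hyC, hapex⟩ := apex_exists h hC
  obtain ⟨hcls, hyc'⟩ := cls_mem_of_mem hC hyC
  have hycov : Cov H T y := (Finset.mem_filter.mp hyc').2
  have hyv : y ∈ T.verts := (Finset.mem_filter.mp hyc').1
  by_cases hyρ : y = ρ
  · subst hyρ
    have hpy : part H T y = C := by rw [part, if_pos hycov]; exact hcls
    have hpu : part H T u₀ ≠ C := fun hh => hu₀c (mem_of_part_eq hC hu₀ hh).2
    obtain ⟨p, q, hpq, hpp, hpq'⟩ := cross_exit (h.rr u₀ hu₀) hpy hpu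
    have hpmem := mem_of_part_eq hC (h.wf _ hpq).1 hpp
    refine ⟨p, hpmem.1, ?_⟩
    have hmem : (p, q) ∈ (crossE H T).filter (fun e => e.1 = p) := by
      rw [Finset.mem_filter]
      refine ⟨Finset.mem_filter.mpr ⟨hpq, ?_⟩, rfl⟩
      rw [hpp]
      exact fun hh => hpq' hh.symm
    have hpos : 0 < ((crossE H T).filter fun e => e.1 = p).card :=
      Finset.card_pos.mpr ⟨_, hmem⟩
    unfold crossdeg
    omega
  · obtain ⟨x, hxy⟩ := h.in_edge_exists hyv hyρ
    have hxcov : ¬ Cov H T x := hapex.2 x hxy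
    have hcross := uncov_edge_cross h hleq hxy (Or.inl hxcov)
    refine ⟨y, hyC, ?_⟩
    have hmem : (x, y) ∈ (crossE H T).filter (fun e => e.2 = y) := by
      rw [Finset.mem_filter]
      exact ⟨Finset.mem_filter.mpr ⟨hxy, hcross⟩, rfl⟩
    have hpos : 0 < ((crossE H T).filter fun e => e.2 = y).card :=
      Finset.card_pos.mpr ⟨_, hmem⟩
    unfold crossdeg
    omega

lemma tree_side (h : TreeH T ρ) (hleq : T.leaves = H.leaves)
    (hne : (T.verts.filter fun v => ¬ Cov H T v).Nonempty) :
    (T.verts.filter fun v => ¬ Cov H T v).card + 2 ≤ (comps H T).card := by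
  obtain ⟨u₀, hu₀m⟩ := hne
  rw [Finset.mem_filter] at hu₀m
  obtain ⟨hu₀, hu₀c⟩ := hu₀m
  set I := T.verts.filter (fun v => ¬ Cov H T v) with hI
  set W := (coveredSet H T).filter (fun v => 1 ≤ crossdeg H T v) with hW
  have hsW : (comps H T).card ≤ W.card := by
    have hex : ∀ C ∈ comps H T, ∃ w, w ∈ W ∧ w ∈ C := by
      intro C hC
      obtain ⟨w, hwC, hwd⟩ := comp_witness h hleq hu₀ hu₀c hC
      exact ⟨w, Finset.mem_filter.mpr ⟨(cls_mem_of_mem hC hwC).2, hwd⟩, hwC⟩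
    apply Finset.card_le_card_of_injOn
      (fun C => if hc : ∃ w, w ∈ W ∧ w ∈ C then hc.choose else 0)
    · intro C hC
      rw [Finset.mem_coe] at hC
      dsimp only
      rw [dif_pos (hex C hC)]
      exact (hex C hC).choose_spec.1
    · intro C hC C' hC' heq
      rw [Finset.mem_coe] at hC hC'
      dsimp only at heq
      rw [dif_pos (hex C hC), dif_pos (hex C' hC')] at heq
      exact comps_disjoint hC hC' (hex C hC).choose_spec.2
        (heq ▸ (hex C' hC').choose_spec.2)
  have hIsub : I ⊆ T.verts := Finset.filter_subset _ _
  have hWsub : W ⊆ T.verts := fun w hw =>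
    (Finset.mem_filter.mp (Finset.mem_filter.mp hw).1).1
  have hdisj : Disjoint I W := by
    rw [Finset.disjoint_left]
    intro a haI haW
    exact (Finset.mem_filter.mp haI).2 (Finset.mem_filter.mp (Finset.mem_filter.mp haW).1).2
  have hbig : 3 * I.card + W.card ≤ ∑ v ∈ T.verts, crossdeg H T v := by
    have hIW : ∑ v ∈ I, crossdeg H T v + ∑ v ∈ W, crossdeg H T v
        = ∑ v ∈ I ∪ W, crossdeg H T v := (Finset.sum_union hdisj).symm
    have hIsum : ∑ v ∈ I, crossdeg H T v = 3 * I.card := by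
      rw [Finset.sum_congr rfl (fun v hv => I_crossdeg h hleq
        (Finset.mem_filter.mp hv).1 (Finset.mem_filter.mp hv).2),
        Finset.sum_const, smul_eq_mul, Nat.mul_comm]
    have hWsum : W.card ≤ ∑ v ∈ W, crossdeg H T v := by
      have h1 : W.card = ∑ _v ∈ W, 1 := by
        rw [Finset.sum_const, smul_eq_mul, mul_one]
      rw [h1]
      exact Finset.sum_le_sum (fun v hv => (Finset.mem_filter.mp hv).2)
    have hle : ∑ v ∈ I ∪ W, crossdeg H T v ≤ ∑ v ∈ T.verts, crossdeg H T v :=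
      Finset.sum_le_sum_of_subset (Finset.union_subset hIsub hWsub)
    omega
  have hcs := cross_sum (H := H) h
  have e1 := cross_nc_split (H := H) (T := T)
  have e2 := edges_card h
  have e3 : (coveredSet H T).card + I.card = T.verts.card :=
    Finset.card_filter_add_card_filter_not (s := T.verts) (p := Cov H T)
  have e4 : (T.edges.filter fun e => part H T e.1 = part H T e.2).card
      + (comps H T).card = (coveredSet H T).card := by
    have hsplit := Finset.card_filter_add_card_filter_not
      (s := coveredSet H T) (p := fun y => ∀ x, (x, y) ∈ T.edges → ¬ Cov H T x)
    rw [apex_card h] at hsplit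
    rw [nc_card h hleq]
    omega
  omega

end Count

/-! #### The network side -/

section Hside

variable {H T : FinDigraph} {ρ : ℕ}

def DAdj (H : FinDigraph) (u v : ℕ) : Prop := (u, v) ∈ H.edges ∧ H.indeg v ≤ 1

def UpD (H : FinDigraph) : ℕ → ℕ → Prop := Relation.ReflTransGen (DAdj H)

lemma upD_delReach {r x : ℕ} (hr : UpD H r x) : DelReach H x r ∧ DelReach H r x := by
  have hfwd : DelReach H r x :=
    Relation.ReflTransGen.mono (p := delAdj H) (fun u v hh => Or.inl ⟨hh.1, hh.2⟩) _ _ hr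
  have hsymm : Symmetric (delAdj H) := fun u v hh =>
    hh.elim (fun a => Or.inr a) (fun a => Or.inl a)
  exact ⟨@Std.Symm.symm _ _ (@Relation.ReflTransGen.stdSymm _ _ ⟨fun a b hab => hsymm hab⟩) _ _ hfwd, hfwd⟩

lemma top_exists (hWF : H.WF) (hAc : H.Acyclic) :
    ∀ n x, anc H x ≤ n → x ∈ H.verts →
      ∃ r, UpD H r x ∧ r ∈ H.verts ∧ (H.indeg r = 0 ∨ 2 ≤ H.indeg r) := by
  intro n
  induction n with
  | zero =>
    intro x hm hx
    by_cases h1 : H.indeg x = 1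
    · exfalso
      have hpos : 0 < (H.edges.filter fun e => e.2 = x).card := by
        have : (H.edges.filter fun e => e.2 = x).card = H.indeg x := rfl
        omega
      obtain ⟨e, he⟩ := Finset.card_pos.mp hpos
      rw [Finset.mem_filter] at he
      have hedge : (e.1, x) ∈ H.edges := by
        rw [show (e.1, x) = e from Prod.ext rfl he.2.symm]
        exact he.1
      have hne : e.1 ≠ x := fun hh => no_self_edge hAc (hh ▸ hedge)
      have := anc_lt hAc (Relation.ReflTransGen.single hedge) hne hx
      omega
    · exact ⟨x, Relation.ReflTransGen.refl, hx, by omega⟩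
  | succ n ih =>
    intro x hm hx
    by_cases h1 : H.indeg x = 1
    · have hpos : 0 < (H.edges.filter fun e => e.2 = x).card := by
        have : (H.edges.filter fun e => e.2 = x).card = H.indeg x := rfl
        omega
      obtain ⟨e, he⟩ := Finset.card_pos.mp hpos
      rw [Finset.mem_filter] at he
      have hedge : (e.1, x) ∈ H.edges := by
        rw [show (e.1, x) = e from Prod.ext rfl he.2.symm]
        exact he.1
      have hne : e.1 ≠ x := fun hh => no_self_edge hAc (hh ▸ hedge)
      have hlt := anc_lt hAc (Relation.ReflTransGen.single hedge) hne hx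
      obtain ⟨r, hru, hrv, hr⟩ := ih e.1 (by omega) (hWF _ hedge).1
      exact ⟨r, hru.tail ⟨hedge, by omega⟩, hrv, hr⟩
    · exact ⟨x, Relation.ReflTransGen.refl, hx, by omega⟩

lemma sfb_cconn (h : TreeH T ρ) (hleq : T.leaves = H.leaves) {x x' : ℕ}
    (hsf : SameFBlock H T x x') : CConn H T x' x :=
  master h hleq hsf onTreePath_self_right

lemma comp_endpoint (h : TreeH T ρ) (hleq : T.leaves = H.leaves) {C : Finset ℕ}
    (hC : C ∈ comps H T) : ∃ x, x ∈ C ∧ (H.IsLeaf x ∨ T.IsSource x) := by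
  obtain ⟨v₀, hv₀, rfl⟩ := Finset.mem_image.mp hC
  have hcov : Cov H T v₀ := (Finset.mem_filter.mp hv₀).2
  obtain ⟨a, b, hsf, hp⟩ := hcov
  have hconn : CConn H T v₀ a := master h hleq hsf hp
  have hcova : Cov H T a := ⟨a, b, hsf, onTreePath_self_left⟩
  have hav : a ∈ T.verts := (sfb_mem_verts hleq hsf).1
  exact ⟨a, mem_cls.mpr ⟨Finset.mem_filter.mpr ⟨hav, hcova⟩, hconn⟩, sameFBlock_fst hsf⟩

lemma comps_card_le (h : TreeH T ρ) (hleq : T.leaves = H.leaves)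
    (hWFH : H.WF) (hAcH : H.Acyclic) :
    (comps H T).card ≤ 1 + (H.verts.filter fun v => 2 ≤ H.indeg v).card := by
  set retS := H.verts.filter (fun v => 2 ≤ H.indeg v) with hretS
  set P : Finset ℕ → Prop :=
    fun C => ∃ x ∈ C, T.IsSource x ∨ (H.IsLeaf x ∧ RootComp H x) with hP
  have hsplit := Finset.card_filter_add_card_filter_not (s := comps H T) (p := P)
  have hroot : ((comps H T).filter P).card ≤ 1 := by
    rw [Finset.card_le_one]
    intro C hC C' hC'
    rw [Finset.mem_filter] at hC hC'
    obtain ⟨hCm, x, hxC, hx⟩ := hC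
    obtain ⟨hCm', x', hxC', hx'⟩ := hC'
    have hsf : SameFBlock H T x x' := by
      rcases hx with hsx | ⟨hlx, hrx⟩
      · rcases hx' with hsx' | ⟨hlx', hrx'⟩
        · exact Or.inr (Or.inl ⟨hsx, hsx'⟩)
        · exact Or.inr (Or.inr (Or.inl ⟨hsx, hlx', hrx'⟩))
      · rcases hx' with hsx' | ⟨hlx', hrx'⟩
        · exact Or.inr (Or.inr (Or.inr ⟨hsx', hlx, hrx⟩))
        · exact Or.inl ⟨hlx, hlx', Or.inr ⟨hrx, hrx'⟩⟩
    have hconn : CConn H T x' x := sfb_cconn h hleq hsf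
    have h1 := (cls_mem_of_mem hCm hxC).1
    have h2 := (cls_mem_of_mem hCm' hxC').1
    rw [← h1, ← h2]
    exact (cls_eq_of_cconn hconn).symm
  have hnon : ((comps H T).filter fun C => ¬ P C).card ≤ retS.card := by
    have hex : ∀ C ∈ (comps H T).filter (fun C => ¬ P C),
        ∃ r, r ∈ retS ∧ ∃ x, x ∈ C ∧ H.IsLeaf x ∧ UpD H r x := by
      intro C hC
      rw [Finset.mem_filter] at hC
      obtain ⟨hCm, hnP⟩ := hC
      obtain ⟨x, hxC, hxt⟩ := comp_endpoint h hleq hCm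
      have hlx : H.IsLeaf x := by
        rcases hxt with hl | hs
        · exact hl
        · exact absurd ⟨x, hxC, Or.inl hs⟩ hnP
      obtain ⟨r, hru, hrv, hr⟩ := top_exists hWFH hAcH (anc H x) x le_rfl hlx.1
      rcases hr with h0 | h2
      · exact absurd ⟨x, hxC, Or.inr ⟨hlx, r, ⟨hrv, h0⟩, (upD_delReach hru).1⟩⟩ hnP
      · exact ⟨r, Finset.mem_filter.mpr ⟨hrv, h2⟩, x, hxC, hlx, hru⟩
    apply Finset.card_le_card_of_injOn
      (fun C => if hc : ∃ r, r ∈ retS ∧ ∃ x, x ∈ C ∧ H.IsLeaf x ∧ UpD H r x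
        then hc.choose else 0)
    · intro C hC
      rw [Finset.mem_coe] at hC
      dsimp only
      rw [dif_pos (hex C hC)]
      exact (hex C hC).choose_spec.1
    · intro C hC C' hC' heq
      rw [Finset.mem_coe, Finset.mem_filter] at hC hC'
      dsimp only at heq
      rw [dif_pos (hex C (Finset.mem_filter.mpr hC)),
        dif_pos (hex C' (Finset.mem_filter.mpr hC'))] at heq
      obtain ⟨hret, x, hxC, hlx, hupd⟩ := (hex C (Finset.mem_filter.mpr hC)).choose_spec
      obtain ⟨hret', x', hxC', hlx', hupd'⟩ := (hex C' (Finset.mem_filter.mpr hC')).choose_spec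
      rw [heq] at hupd
      have hdel : DelReach H x x' :=
        Relation.ReflTransGen.trans (upD_delReach hupd).1 (upD_delReach hupd').2
      have hsf : SameFBlock H T x x' := Or.inl ⟨hlx, hlx', Or.inl hdel⟩
      have hconn : CConn H T x' x := sfb_cconn h hleq hsf
      have h1 := (cls_mem_of_mem hC.1 hxC).1
      have h2 := (cls_mem_of_mem hC'.1 hxC').1
      rw [← h1, ← h2]
      exact (cls_eq_of_cconn hconn).symm
  omega

lemma retic_card_le : (H.verts.filter fun v => 2 ≤ H.indeg v).card ≤ H.hybNum := by
  unfold FinDigraph.hybNum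
  have h1 : (H.verts.filter fun v => 2 ≤ H.indeg v).card
      = ∑ _v ∈ H.verts.filter (fun v => 2 ≤ H.indeg v), 1 := by
    rw [Finset.sum_const, smul_eq_mul, mul_one]
  rw [h1]
  refine Finset.sum_le_sum fun v hv => ?_
  have := (Finset.mem_filter.mp hv).2
  omega

end Hside

lemma tree_bound (H T : FinDigraph) (ρ : ℕ) (h : TreeH T ρ)
    (hleq : T.leaves = H.leaves) (hWFH : H.WF) (hAcH : H.Acyclic)
    {k : ℕ} (hk : H.hybNum = k) (hk1 : 1 ≤ k) :
    (T.verts.filter fun v => ¬ Cov H T v).card ≤ k - 1 := by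
  rcases Finset.eq_empty_or_nonempty (T.verts.filter fun v => ¬ Cov H T v) with he | hne
  · rw [he]
    simp
  · have h1 := tree_side h hleq hne
    have h2 := comps_card_le h hleq hWFH hAcH
    have h3 := retic_card_le (H := H)
    omega

end S8
/-- Let `ℋ = (H, ℰ)` be a CNET for a set `𝒯` of rooted binary
phylogenetic `X`-trees, with hybridization number `k ≥ 1` and deletion AAF `F`. For each
tree `T` of `𝒯`, let `I(T)` be the set of nodes of `T` that belong to no path of `T`
between two leaves lying in the same component of `F` (the root being counted as a
leaf). Then `|I(T)| ≤ k − 1` for every tree of `𝒯`; consequently, if `|𝒯| = 3` then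
`|⋃_{T ∈ 𝒯} I(T)| ≤ 3(k − 1)`. -/
theorem ISet_card_le
    {ι : Type} [Fintype ι] [DecidableEq ι]
    (𝒯 : ι → FinDigraph) (X : Finset ℕ)
    (hT : ∀ i, IsTreeOn (𝒯 i) X)
    (𝓗 : CNET ι) (k : ℕ)
    (hC : IsCNET 𝒯 X 𝓗) (hk : 𝓗.H.hybNum = k) (hk1 : 1 ≤ k) :
    (∀ i, (ISet 𝓗 (𝒯 i)).card ≤ k - 1) ∧
    (Fintype.card ι = 3 →
      (Finset.univ.biUnion fun i => ISet 𝓗 (𝒯 i)).card ≤ 3 * (k - 1)) := by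
  have hmain : ∀ i, (ISet 𝓗 (𝒯 i)).card ≤ k - 1 := by
    intro i
    obtain ⟨⟨hWFT, hAcT, ⟨ρ, hρs, hρo, hρr⟩, hdeg⟩, hlv⟩ := hT i
    have htree : S8.TreeH (𝒯 i) ρ := ⟨hWFT, hAcT, hρs, hρr, hdeg⟩
    have hleq : (𝒯 i).leaves = 𝓗.H.leaves := by rw [hlv, hC.2.2.2.1]
    have hb := S8.tree_bound 𝓗.H (𝒯 i) ρ htree hleq hC.1 hC.2.1 hk hk1
    have hrw : ISet 𝓗 (𝒯 i)
        = (𝒯 i).verts.filter fun v => ¬ S8.Cov 𝓗.H (𝒯 i) v := rfl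
    rw [hrw]
    exact hb
  refine ⟨hmain, ?_⟩
  intro h3
  calc (Finset.univ.biUnion fun i => ISet 𝓗 (𝒯 i)).card
      ≤ ∑ i, (ISet 𝓗 (𝒯 i)).card := Finset.card_biUnion_le
    _ ≤ ∑ _i : ι, (k - 1) := Finset.sum_le_sum fun i _ => hmain i
    _ = Fintype.card ι * (k - 1) := by
        rw [Finset.sum_const, smul_eq_mul, Finset.card_univ]
    _ = 3 * (k - 1) := by rw [h3]
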